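/- Let α = π√(2/3). Assuming the bound p(m) < (π/√(6m))·e^{α√m} for all m ≥ 1, we have p(n-1, n-1) < e^{α√n} for all n ≥ 1, and p(n, n-1) < √n · e^{α√n} for all n ≥ 1. -/

import Mathlib

/-- The partition function: number of partitions of `n`, with `p 0 = 1`. -/
def partitionFn (n : ℕ) : ℕ := Fintype.card (Nat.Partition n)

/-- `P n k = ∑_{j=0}^k C(n-j, k-j) p(j)`. -/
def P (n k : ℕ) : ℕ :=
  ∑ j ∈ Finset.range (k + 1), Nat.choose (n - j) (k - j) * partitionFn j


noncomputable def alC : ℝ := Real.pi * Real.sqrt (2/3)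

lemma sqrt23_lb : (0.816 : ℝ) ≤ Real.sqrt (2/3) := by
  rw [show (0.816:ℝ) = Real.sqrt (0.816^2) by rw [Real.sqrt_sq] ; norm_num]
  apply Real.sqrt_le_sqrt; norm_num

lemma sqrt23_ub : Real.sqrt (2/3) ≤ (0.8165 : ℝ) := by
  rw [show (0.8165:ℝ) = Real.sqrt (0.8165^2) by rw [Real.sqrt_sq]; norm_num]
  apply Real.sqrt_le_sqrt; norm_num

lemma alC_lb : (2.563 : ℝ) ≤ alC := by
  have h1 := Real.pi_gt_d6
  have h2 := sqrt23_lb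
  have : (3.141592 : ℝ) * 0.816 ≤ alC := by
    apply mul_le_mul (le_of_lt h1) h2 (by norm_num) (by positivity)
  linarith

lemma alC_ub : alC ≤ (2.566 : ℝ) := by
  have h1 := Real.pi_lt_d6
  have h2 := sqrt23_ub
  have : alC ≤ (3.141593 : ℝ) * 0.8165 := by
    apply mul_le_mul (le_of_lt h1) h2 (Real.sqrt_nonneg _) (by norm_num)
  linarith

lemma quad_le_exp {x : ℝ} (hx : 0 ≤ x) : 1 + x + x^2/2 ≤ Real.exp x := by
  have := Real.sum_le_exp_of_nonneg hx 3
  simp [Finset.sum_range_succ] at this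
  linarith

lemma sqrt_sq_nat (j : ℕ) : Real.sqrt j ^ 2 = j := Real.sq_sqrt (Nat.cast_nonneg j)

lemma stepA (j : ℕ) (hj : 1 ≤ j) :
    alC / (2 * Real.sqrt j) * Real.exp (alC * Real.sqrt j)
      ≤ Real.exp (alC * Real.sqrt ((j:ℝ)+1)) - Real.exp (alC * Real.sqrt j) := by
  set s := Real.sqrt j with hs
  set t := Real.sqrt ((j:ℝ)+1) with ht
  have hs1 : (1:ℝ) ≤ s := by
    rw [hs, show (1:ℝ) = Real.sqrt 1 by simp]
    exact Real.sqrt_le_sqrt (by exact_mod_cast hj)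
  have hs2 : s^2 = j := sqrt_sq_nat j
  have ht2 : t^2 = (j:ℝ)+1 := Real.sq_sqrt (by positivity)
  have htpos : 0 < t := Real.sqrt_pos.mpr (by positivity)
  have hts : s < t := by nlinarith
  have hd : (t - s) * (t + s) = 1 := by nlinarith
  have ha1 := alC_lb
  have ha2 := alC_ub
  have hdpos : 0 < t - s := by linarith
  have hq := quad_le_exp (x := alC * (t - s)) (by nlinarith)
  have hexp : Real.exp (alC * t) = Real.exp (alC * s) * Real.exp (alC * (t - s)) := by
    rw [← Real.exp_add]; ring_nf
  have hE : 0 < Real.exp (alC * s) := Real.exp_pos _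
  have hu : (0:ℝ) < t + s := by linarith
  have hd1 : t - s = 1/(t+s) := by
    rw [eq_div_iff (by linarith)]; exact hd
  have hid : (t+s)^2 = 2*s*(t+s) + 1 := by linear_combination hd
  have expand : (alC * (t - s) + (alC * (t-s))^2 / 2) * (2*s) * (t+s)^2
      = 2*alC*s*(t+s) + alC^2*s := by
    linear_combination (2*alC*s*(t+s) + alC^2*s*((t-s)*(t+s)+1)) * hd
  have h2 : alC * (t+s)^2 ≤ 2*alC*s*(t+s) + alC^2*s := by
    rw [hid]; nlinarith [mul_le_mul ha1 hs1 (by norm_num) (by linarith : (0:ℝ) ≤ alC)]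
  have key : alC / (2 * s) ≤ alC * (t - s) + (alC * (t-s))^2 / 2 := by
    rw [div_le_iff₀ (by linarith)]
    have := expand ▸ h2
    exact le_of_mul_le_mul_right (by linarith [this]) (by positivity : (0:ℝ) < (t+s)^2)
  calc alC / (2 * s) * Real.exp (alC * s)
      ≤ (alC * (t - s) + (alC * (t-s))^2 / 2) * Real.exp (alC * s) := by
        apply mul_le_mul_of_nonneg_right key hE.le
    _ ≤ (Real.exp (alC * (t-s)) - 1) * Real.exp (alC * s) := by
        apply mul_le_mul_of_nonneg_right _ hE.le; linarith
    _ = Real.exp (alC * t) - Real.exp (alC * s) := by rw [hexp]; ring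

lemma quadU (u : ℝ) (hu : (2.41:ℝ) ≤ u) :
    0 ≤ (2*alC-4)*u^2 + (alC^2-2*alC)*u - alC^2 := by
  have ha1 := alC_lb
  have ha2 := alC_ub
  nlinarith [sq_nonneg (u-2.41), mul_nonneg (sub_nonneg.mpr hu) (sub_nonneg.mpr ha1),
    mul_nonneg (sub_nonneg.mpr hu) (sub_nonneg.mpr hu)]

lemma mainU (u : ℝ) (hu : (2.41:ℝ) ≤ u) :
    2*u^2*(u^2-1) ≤ (u-1)^2*(2*u^2+2*alC*u+alC^2) := by
  have h1 := quadU u hu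
  have h2 : (0:ℝ) ≤ u - 1 := by linarith
  nlinarith [mul_nonneg h2 h1]

lemma stepB (n : ℕ) (hn : 1 ≤ n) :
    Real.sqrt n * Real.exp (alC * Real.sqrt n) + Real.exp (alC * Real.sqrt ((n:ℝ)+1))
      ≤ Real.sqrt ((n:ℝ)+1) * Real.exp (alC * Real.sqrt ((n:ℝ)+1)) := by
  set s := Real.sqrt n with hs
  set t := Real.sqrt ((n:ℝ)+1) with ht
  have hs1 : (1:ℝ) ≤ s := by
    rw [hs, show (1:ℝ) = Real.sqrt 1 by simp]
    exact Real.sqrt_le_sqrt (by exact_mod_cast hn)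
  have hs2 : s^2 = n := sqrt_sq_nat n
  have ht2 : t^2 = (n:ℝ)+1 := Real.sq_sqrt (by positivity)
  have htpos : 0 < t := Real.sqrt_pos.mpr (by positivity)
  have hts : s < t := by nlinarith
  have hd : (t - s) * (t + s) = 1 := by nlinarith
  have ha1 := alC_lb
  have ha2 := alC_ub
  have hdpos : 0 < t - s := by linarith
  have ht14 : (1.41 : ℝ) ≤ t := by nlinarith
  have hu24 : (2.41 : ℝ) ≤ t + s := by linarith
  have hupos : (0:ℝ) < t + s := by linarith
  have hq := quad_le_exp (x := alC * (t - s)) (by nlinarith)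
  have hexp : Real.exp (alC * t) = Real.exp (alC * s) * Real.exp (alC * (t - s)) := by
    rw [← Real.exp_add]; ring_nf
  have hE : 0 < Real.exp (alC * s) := Real.exp_pos _
  have expand : (1 + alC * (t-s) + (alC * (t-s))^2 / 2) * (2*(t+s)^2)
      = 2*(t+s)^2 + 2*alC*(t+s) + alC^2 := by
    linear_combination (2*alC*(t+s) + alC^2*((t-s)*(t+s)+1)) * hd
  have hS : s*(2*(t+s)) = (t+s)^2 - 1 := by linear_combination -hd
  have hT : (t-1)*(2*(t+s)) = (t+s-1)^2 := by linear_combination hd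
  have hmain := mainU (t+s) hu24
  have poly : s * (2*(t+s)^2) ≤ (t-1) * (2*(t+s)^2 + 2*alC*(t+s) + alC^2) := by
    have h5 : s*(2*(t+s)^2)*(2*(t+s)) = 2*(t+s)^2*((t+s)^2-1) := by
      linear_combination (-2*(t+s)^2) * hd
    have h6 : (t-1)*(2*(t+s)^2+2*alC*(t+s)+alC^2)*(2*(t+s))
        = (t+s-1)^2*(2*(t+s)^2+2*alC*(t+s)+alC^2) := by
      linear_combination (2*(t+s)^2+2*alC*(t+s)+alC^2) * hd
    have h7 : s*(2*(t+s)^2)*(2*(t+s)) ≤ (t-1)*(2*(t+s)^2+2*alC*(t+s)+alC^2)*(2*(t+s)) := by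
      rw [h5, h6]; exact hmain
    exact le_of_mul_le_mul_right h7 (by positivity)
  have key : s ≤ (t-1) * (1 + alC*(t-s) + (alC*(t-s))^2/2) := by
    have h3 : s * (2*(t+s)^2) ≤ ((t-1) * (1 + alC * (t-s) + (alC * (t-s))^2 / 2)) * (2*(t+s)^2) := by
      rw [mul_assoc, expand]; linarith [poly]
    exact le_of_mul_le_mul_right h3 (by positivity)
  have h4 : s * Real.exp (alC * s) ≤ (t-1) * Real.exp (alC * t) := by
    rw [hexp]
    calc s * Real.exp (alC * s)
        ≤ ((t-1) * (1 + alC*(t-s) + (alC*(t-s))^2/2)) * Real.exp (alC * s) := by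
          apply mul_le_mul_of_nonneg_right key hE.le
      _ ≤ ((t-1) * Real.exp (alC * (t-s))) * Real.exp (alC * s) := by
          apply mul_le_mul_of_nonneg_right _ hE.le
          apply mul_le_mul_of_nonneg_left (by linarith) (by linarith)
      _ = (t-1) * (Real.exp (alC * s) * Real.exp (alC * (t-s))) := by ring
  linarith [h4]


lemma partitionFn_zero : partitionFn 0 = 1 := by
  simp [partitionFn]

lemma L1 (hp : ∀ m : ℕ, 1 ≤ m →
      (partitionFn m : ℝ) < alC / (2 * Real.sqrt m) * Real.exp (alC * Real.sqrt m)) :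
    ∀ n : ℕ, 1 ≤ n →
      (∑ j ∈ Finset.range n, (partitionFn j : ℝ)) < Real.exp (alC * Real.sqrt n) := by
  intro n hn
  obtain ⟨m, rfl⟩ : ∃ m, n = m + 1 := ⟨n - 1, by omega⟩
  have hone : (1:ℝ) < Real.exp alC := by
    have := Real.add_one_le_exp alC
    have := alC_lb
    linarith
  set f : ℕ → ℝ := fun i => Real.exp (alC * Real.sqrt ((i:ℝ)+1)) with hf
  have hgoal : Real.exp (alC * Real.sqrt ((m+1:ℕ):ℝ)) = f m := by
    simp only [hf]; push_cast; ring_nf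
  have hf0 : f 0 = Real.exp alC := by simp [hf]
  rw [hgoal, Finset.sum_range_succ']
  have hp0 : (partitionFn 0 : ℝ) = 1 := by rw [partitionFn_zero]; norm_num
  rw [hp0]
  rcases Nat.eq_zero_or_pos m with rfl | hm
  · rw [Finset.range_zero, Finset.sum_empty, hf0]
    linarith
  · have hterm : ∀ i ∈ Finset.range m, (partitionFn (i+1) : ℝ) < f (i+1) - f i := by
      intro i _
      have h := lt_of_lt_of_le (hp (i+1) (by omega)) (stepA (i+1) (by omega))
      simp only [hf]
      push_cast at h ⊢
      linarith
    have hsum := Finset.sum_lt_sum_of_nonempty (Finset.nonempty_range_iff.mpr (by omega)) hterm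
    rw [Finset.sum_range_sub f m, hf0] at hsum
    linarith

lemma L2 (hp : ∀ m : ℕ, 1 ≤ m →
      (partitionFn m : ℝ) < alC / (2 * Real.sqrt m) * Real.exp (alC * Real.sqrt m)) :
    ∀ n : ℕ, 1 ≤ n →
      (∑ j ∈ Finset.range n, ((n:ℝ) - j) * (partitionFn j : ℝ)) <
        Real.sqrt n * Real.exp (alC * Real.sqrt n) := by
  intro n hn
  induction n, hn using Nat.le_induction with
  | base =>
    have hone : (1:ℝ) < Real.exp alC := by
      have := Real.add_one_le_exp alC
      have := alC_lb
      linarith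
    simp [partitionFn_zero]
    have := alC_lb
    linarith
  | succ n hn ih =>
    have e1 : ∑ j ∈ Finset.range (n+1), (((n+1:ℕ):ℝ) - j) * (partitionFn j : ℝ)
        = (∑ j ∈ Finset.range n, ((n:ℝ) - j) * (partitionFn j : ℝ))
          + ∑ j ∈ Finset.range (n+1), (partitionFn j : ℝ) := by
      have e2 : ∑ j ∈ Finset.range (n+1), (((n+1:ℕ):ℝ) - j) * (partitionFn j : ℝ)
          = (∑ j ∈ Finset.range (n+1), ((n:ℝ) - j) * (partitionFn j : ℝ))
            + ∑ j ∈ Finset.range (n+1), (partitionFn j : ℝ) := by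
        rw [← Finset.sum_add_distrib]
        apply Finset.sum_congr rfl
        intro j _
        push_cast
        ring
      rw [e2, Finset.sum_range_succ (fun j => ((n:ℝ) - j) * (partitionFn j : ℝ))]
      norm_num
    rw [e1]
    have h2 := L1 hp (n+1) (by omega)
    have h3 := stepB n hn
    have hc1 : Real.sqrt (((n:ℕ):ℝ)+1) = Real.sqrt ((n+1:ℕ)) := by push_cast; ring_nf
    rw [hc1] at h3
    linarith

theorem P_filiform_bounds
    (hp : ∀ m : ℕ, 1 ≤ m →
      (partitionFn m : ℝ) <
        Real.pi / Real.sqrt (6 * m) * Real.exp (Real.pi * Real.sqrt (2 / 3) * Real.sqrt m)) :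
    (∀ n : ℕ, 1 ≤ n →
      (P (n - 1) (n - 1) : ℝ) < Real.exp (Real.pi * Real.sqrt (2 / 3) * Real.sqrt n)) ∧
    (∀ n : ℕ, 1 ≤ n →
      (P n (n - 1) : ℝ) <
        Real.sqrt n * Real.exp (Real.pi * Real.sqrt (2 / 3) * Real.sqrt n)) := by
  have halC : ∀ n : ℕ, Real.pi * Real.sqrt (2/3) * Real.sqrt n = alC * Real.sqrt n := by
    intro n; rw [alC]
  have hfac : Real.sqrt (2/3) * Real.sqrt 6 = 2 := by
    rw [← Real.sqrt_mul (by norm_num)]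
    rw [show (2/3:ℝ)*6 = 4 by norm_num, show (4:ℝ) = 2^2 by norm_num,
      Real.sqrt_sq (by norm_num)]
  have hp' : ∀ m : ℕ, 1 ≤ m →
      (partitionFn m : ℝ) < alC / (2 * Real.sqrt m) * Real.exp (alC * Real.sqrt m) := by
    intro m hm
    have h6 : Real.sqrt (6 * (m:ℝ)) = Real.sqrt 6 * Real.sqrt m :=
      Real.sqrt_mul (by norm_num) _
    have hsm : (0:ℝ) < Real.sqrt m := Real.sqrt_pos.mpr (by exact_mod_cast hm)
    have h6pos : (0:ℝ) < Real.sqrt 6 := Real.sqrt_pos.mpr (by norm_num)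
    have heq : Real.pi / Real.sqrt (6 * (m:ℝ)) = alC / (2 * Real.sqrt m) := by
      rw [h6, alC, div_eq_div_iff (by positivity) (by positivity)]
      have : Real.pi * (2 * Real.sqrt m) = Real.pi * (Real.sqrt (2/3) * Real.sqrt 6) * Real.sqrt m := by
        rw [hfac]; ring
      rw [this]; ring
    have := hp m hm
    rw [heq, halC] at this
    exact this
  constructor
  · intro n hn
    obtain ⟨m, rfl⟩ : ∃ m, n = m + 1 := ⟨n - 1, by omega⟩
    have hPm : (P m m : ℝ) = ∑ j ∈ Finset.range (m+1), (partitionFn j : ℝ) := by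
      rw [P]
      push_cast
      apply Finset.sum_congr rfl
      intro j _
      rw [Nat.choose_self]
      push_cast
      ring
    rw [show m + 1 - 1 = m from rfl, hPm, halC]
    exact L1 hp' (m+1) (by omega)
  · intro n hn
    obtain ⟨m, rfl⟩ : ∃ m, n = m + 1 := ⟨n - 1, by omega⟩
    have hPm : (P (m+1) m : ℝ) = ∑ j ∈ Finset.range (m+1), (((m+1:ℕ):ℝ) - j) * (partitionFn j : ℝ) := by
      rw [P]
      push_cast
      apply Finset.sum_congr rfl
      intro j hj
      rw [Finset.mem_range] at hj
      have hj' : j ≤ m := by omega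
      have hsplit : m + 1 - j = (m - j) + 1 := by omega
      rw [hsplit, Nat.choose_succ_self_right]
      have hc : ((m - j + 1 : ℕ) : ℝ) = (m:ℝ) + 1 - j := by
        push_cast [Nat.cast_sub hj']
        ring
      rw [hc]
    have hgoal : (P (m+1) (m+1-1) : ℝ) < Real.sqrt ((m+1:ℕ)) * Real.exp (alC * Real.sqrt ((m+1:ℕ))) := by
      rw [show m + 1 - 1 = m from rfl, hPm]
      have := L2 hp' (m+1) (by omega)
      push_cast at this ⊢
      linarith
    rw [halC]
    exact hgoal
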